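/- arXiv:1810.03773 — 2 statements merged into one kernel-verified Lean document; each statement's English description precedes it below -/
import Mathlib

section
/- Let 0 ≤ γ < √5 and let ‖·‖ be the Euclidean norm on ℝ². For every β = (β₁, β₂) ∈ ℝ² satisfying 10·β₁ ≥ 1 + γ‖β‖ and β₁ + 2·β₂ ≥ 1 + γ‖β‖, one has ‖β‖ ≥ 1/(√5 − γ), with equality if and only if β = (√5/(√5 − γ))·(1/5, 2/5). In particular, the unique minimum-norm element of this constraint set is (√5/(√5 − γ))·(1/5, 2/5), a positive scalar multiple of (1/5, 2/5). -/
/-- for `0 ≤ γ < √5`, over the adversarially trained SVM constraints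
`10β₁ ≥ 1 + γ‖β‖` and `β₁ + 2β₂ ≥ 1 + γ‖β‖` (Euclidean norm on ℝ²), one has
`‖β‖ ≥ 1/(√5 − γ)`, with equality iff `β = (√5/(√5 − γ))·(1/5, 2/5)`. -/
theorem adv_svm_minimizer (γ : ℝ) (hγ0 : 0 ≤ γ) (hγ : γ < Real.sqrt 5)
    (β : EuclideanSpace ℝ (Fin 2))
    (h1 : 10 * β 0 ≥ 1 + γ * ‖β‖) (h2 : β 0 + 2 * β 1 ≥ 1 + γ * ‖β‖) :
    ‖β‖ ≥ 1 / (Real.sqrt 5 - γ) ∧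
      (‖β‖ = 1 / (Real.sqrt 5 - γ) ↔
        β = (Real.sqrt 5 / (Real.sqrt 5 - γ)) •
          (WithLp.equiv 2 (Fin 2 → ℝ)).symm ![1 / 5, 2 / 5]) := by
  have hs5 : Real.sqrt 5 ^ 2 = 5 := Real.sq_sqrt (by norm_num)
  have hspos : (0:ℝ) < Real.sqrt 5 := Real.sqrt_pos.mpr (by norm_num)
  set s := Real.sqrt 5 with hs
  have hc : 0 < s - γ := sub_pos.mpr hγ
  have hn0 : 0 ≤ ‖β‖ := norm_nonneg β
  have hnorm : ‖β‖ ^ 2 = β 0 ^ 2 + β 1 ^ 2 := by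
    have : ‖β‖ = Real.sqrt (β 0 ^ 2 + β 1 ^ 2) := by
      rw [EuclideanSpace.norm_eq]
      congr 1
      simp [Fin.sum_univ_two, Real.norm_eq_abs, sq_abs]
    rw [this, Real.sq_sqrt (by positivity)]
  set a := β 0
  set b := β 1
  set n := ‖β‖
  -- Cauchy-Schwarz: a + 2b ≤ s * n
  have hcs : a + 2 * b ≤ s * n := by
    have h5 : (a + 2*b)^2 ≤ (s*n)^2 := by nlinarith [sq_nonneg (2*a - b)]
    have hx : 0 < a + 2*b := by nlinarith
    nlinarith [mul_nonneg hspos.le hn0]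
  have hmain : 1 ≤ n * (s - γ) := by nlinarith
  have hge : n ≥ 1 / (s - γ) := (div_le_iff₀ hc).mpr (by linarith)
  refine ⟨hge, ?_, ?_⟩
  · intro hn
    have hnc : n * (s - γ) = 1 := by rw [hn]; field_simp
    have hxeq : a + 2 * b = s * n := by nlinarith
    have hba : b = 2 * a := by nlinarith [sq_nonneg (2*a - b)]
    have ha : a = s * n / 5 := by nlinarith
    have hval : s * n / 5 = s / (s - γ) * (1/5) := by
      rw [hn]; field_simp
    ext i
    fin_cases i
    · show a = _
      simp only [PiLp.smul_apply, WithLp.equiv_symm_apply, PiLp.toLp_apply, Matrix.cons_val_zero,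
        Fin.mk_zero, smul_eq_mul]
      rw [ha, hval]
    · show b = _
      simp only [PiLp.smul_apply, WithLp.equiv_symm_apply, PiLp.toLp_apply, Matrix.cons_val_one,
        Matrix.head_cons, Matrix.cons_val_zero, Fin.mk_one, smul_eq_mul]
      rw [hba, ha, hval]; ring
  · intro hβ
    have ha : a = s / (s - γ) * (1/5) := by
      show β 0 = _
      rw [hβ]; simp [WithLp.equiv_symm_apply, PiLp.toLp_apply]
    have hb : b = s / (s - γ) * (2/5) := by
      show β 1 = _
      rw [hβ]; simp [WithLp.equiv_symm_apply, PiLp.toLp_apply]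
    have hsq : n ^ 2 = (1 / (s - γ)) ^ 2 := by
      rw [hnorm, ha, hb]
      field_simp
      nlinarith
    have : n = Real.sqrt (n ^ 2) := (Real.sqrt_sq hn0).symm
    rw [this, hsq, Real.sqrt_sq (by positivity)]
end

section
/- Let D be the probability measure on ℝ² × {−1, +1} assigning probability 1/4 to ((10,0), +1), probability 1/4 to ((−10,0), −1), and probability 1/8 to each of ((1,2), +1), ((1,−2), +1), ((−1,−2), −1), ((−1,2), −1). Then for every β ∈ ℝ² and every e ≥ 0, E_{(x,y)∼D}[ 𝟙( ∃ δ ∈ ℝ², ‖δ‖ ≤ e and y·⟨x + δ, β⟩ ≤ 0 ) ] = L(β, e), where L(β, e) = (1/2)·𝟙(10β₁ ≤ e‖β‖) + (1/4)·𝟙(β₁ + 2β₂ ≤ e‖β‖) + (1/4)·𝟙(β₁ − 2β₂ ≤ e‖β‖). -/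
open MeasureTheory RealInnerProductSpace
open scoped Classical

/-- The adversarial error function
`L(β, e) = (1/2)·𝟙(10β₁ ≤ e‖β‖) + (1/4)·𝟙(β₁ + 2β₂ ≤ e‖β‖) + (1/4)·𝟙(β₁ − 2β₂ ≤ e‖β‖)`,
where `‖·‖` is the Euclidean norm on `ℝ²`. -/
noncomputable def advErr (β : EuclideanSpace ℝ (Fin 2)) (e : ℝ) : ℝ :=
  (1 / 2) * (if 10 * β 0 ≤ e * ‖β‖ then 1 else 0) +
    (1 / 4) * (if β 0 + 2 * β 1 ≤ e * ‖β‖ then 1 else 0) +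
    (1 / 4) * (if β 0 - 2 * β 1 ≤ e * ‖β‖ then 1 else 0)

/-- The point `(a, b)` of `ℝ²` with the Euclidean norm. -/
noncomputable def pt (a b : ℝ) : EuclideanSpace ℝ (Fin 2) :=
  (WithLp.equiv 2 (Fin 2 → ℝ)).symm ![a, b]

/-- The test distribution of the paper's Proposition: mass 1/4 at `((10,0), +1)` and
`((−10,0), −1)`, and mass 1/8 at each of `((1,2), +1)`, `((1,−2), +1)`,
`((−1,−2), −1)`, `((−1,2), −1)`. -/
noncomputable def D : Measure (EuclideanSpace ℝ (Fin 2) × ℝ) :=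
  (1 / 4 : ENNReal) • Measure.dirac (pt 10 0, 1) +
    (1 / 4 : ENNReal) • Measure.dirac (pt (-10) 0, -1) +
    (1 / 8 : ENNReal) • Measure.dirac (pt 1 2, 1) +
    (1 / 8 : ENNReal) • Measure.dirac (pt 1 (-2), 1) +
    (1 / 8 : ENNReal) • Measure.dirac (pt (-1) (-2), -1) +
    (1 / 8 : ENNReal) • Measure.dirac (pt (-1) 2, -1)

lemma key (β x : EuclideanSpace ℝ (Fin 2)) (e y : ℝ) (he : 0 ≤ e) :
    (∃ δ : EuclideanSpace ℝ (Fin 2), ‖δ‖ ≤ e ∧ y * ⟪x + δ, β⟫ ≤ 0) ↔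
      y * ⟪x, β⟫ ≤ |y| * (e * ‖β‖) := by
  constructor
  · rintro ⟨δ, h1, h2⟩
    rw [inner_add_left] at h2
    have hib : |(⟪δ, β⟫ : ℝ)| ≤ e * ‖β‖ :=
      (abs_real_inner_le_norm δ β).trans
        (mul_le_mul_of_nonneg_right h1 (norm_nonneg β))
    have h4 : -(y * ⟪δ, β⟫) ≤ |y| * |(⟪δ, β⟫ : ℝ)| := by
      rw [← abs_mul]; exact neg_le_abs _
    have h5 : |y| * |(⟪δ, β⟫ : ℝ)| ≤ |y| * (e * ‖β‖) :=
      mul_le_mul_of_nonneg_left hib (abs_nonneg y)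
    nlinarith
  · intro h
    by_cases hβ : β = 0
    · exact ⟨0, by simpa using he, by simp [hβ]⟩
    · have hb : (0:ℝ) < ‖β‖ := norm_pos_iff.2 hβ
      have hs : y * Real.sign y = |y| := by
        rcases lt_trichotomy y 0 with hy | hy | hy
        · simp [Real.sign_of_neg hy, abs_of_neg hy]
        · simp [hy]
        · simp [Real.sign_of_pos hy, abs_of_pos hy]
      refine ⟨(-(Real.sign y * e) / ‖β‖) • β, ?_, ?_⟩
      · rw [norm_smul]
        have : ‖(-(Real.sign y * e) / ‖β‖)‖ = |Real.sign y| * e / ‖β‖ := by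
          rw [Real.norm_eq_abs, abs_div, abs_neg, abs_mul, abs_of_nonneg he,
            abs_of_pos hb]
        rw [this, div_mul_cancel₀ _ hb.ne']
        have : |Real.sign y| ≤ 1 := by
          rcases lt_trichotomy y 0 with hy | hy | hy <;>
            simp [Real.sign_of_neg, Real.sign_of_pos, hy]
        nlinarith
      · rw [inner_add_left, real_inner_smul_left, real_inner_self_eq_norm_sq]
        have : (-(Real.sign y * e) / ‖β‖) * ‖β‖ ^ 2 = -(Real.sign y * e) * ‖β‖ := by
          field_simp
        have hy2 : y * ((-(Real.sign y * e) / ‖β‖) * ‖β‖ ^ 2) = -(|y| * (e * ‖β‖)) := by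
          rw [this]; linear_combination (-(e * ‖β‖)) * hs
        nlinarith [hy2]

/-- the expected adversarial classification error under `D` of the
linear classifier `h(x) = ⟨x, β⟩` with budget `e` equals `L(β, e)`. -/
theorem expected_adv_error_eq (β : EuclideanSpace ℝ (Fin 2)) (e : ℝ) (he : 0 ≤ e) :
    (∫ p : EuclideanSpace ℝ (Fin 2) × ℝ,
        (if ∃ δ : EuclideanSpace ℝ (Fin 2), ‖δ‖ ≤ e ∧ p.2 * ⟪p.1 + δ, β⟫ ≤ 0
          then (1 : ℝ) else 0) ∂D) = advErr β e := by
  set f : EuclideanSpace ℝ (Fin 2) × ℝ → ℝ :=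
    fun p => if p.2 * ⟪p.1, β⟫ ≤ |p.2| * (e * ‖β‖) then (1 : ℝ) else 0 with hf
  have hre : (∫ p : EuclideanSpace ℝ (Fin 2) × ℝ,
        (if ∃ δ : EuclideanSpace ℝ (Fin 2), ‖δ‖ ≤ e ∧ p.2 * ⟪p.1 + δ, β⟫ ≤ 0
          then (1 : ℝ) else 0) ∂D) = ∫ p, f p ∂D := by
    refine integral_congr_ae (Filter.Eventually.of_forall fun p => ?_)
    simp only [hf, key β p.1 e p.2 he]
  rw [hre]
  have hmeas : Measurable f := by
    refine Measurable.ite ?_ measurable_const measurable_const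
    exact measurableSet_le
      (measurable_snd.mul ((continuous_fst.inner continuous_const).measurable))
      (measurable_snd.abs.mul_const _)
  have hd : ∀ a : EuclideanSpace ℝ (Fin 2) × ℝ, Integrable f (Measure.dirac a) := by
    intro a
    refine (integrable_const (1 : ℝ)).mono' hmeas.aestronglyMeasurable
      (Filter.Eventually.of_forall fun p => ?_)
    simp only [hf]
    split_ifs <;> norm_num
  have hsd : ∀ (c : ENNReal) (a : EuclideanSpace ℝ (Fin 2) × ℝ), c ≠ ⊤ →
      Integrable f (c • Measure.dirac a) := fun c a hc => (hd a).smul_measure hc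
  have i1 := hsd (1/4) (pt 10 0, 1) (by norm_num)
  have i2 := hsd (1/4) (pt (-10) 0, -1) (by norm_num)
  have i3 := hsd (1/8) (pt 1 2, 1) (by norm_num)
  have i4 := hsd (1/8) (pt 1 (-2), 1) (by norm_num)
  have i5 := hsd (1/8) (pt (-1) (-2), -1) (by norm_num)
  have i6 := hsd (1/8) (pt (-1) 2, -1) (by norm_num)
  rw [D, integral_add_measure ((((i1.add_measure i2).add_measure i3).add_measure i4).add_measure i5) i6,
    integral_add_measure (((i1.add_measure i2).add_measure i3).add_measure i4) i5,
    integral_add_measure ((i1.add_measure i2).add_measure i3) i4,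
    integral_add_measure (i1.add_measure i2) i3,
    integral_add_measure i1 i2]
  simp only [integral_smul_measure, integral_dirac]
  have hpt : ∀ a b : ℝ, (⟪pt a b, β⟫ : ℝ) = a * β 0 + b * β 1 := by
    intro a b
    simp [pt, PiLp.inner_apply, Fin.sum_univ_two]
    ring
  have h00 : ∀ a b : ℝ, pt a b 0 = a := fun a b => rfl
  have h01 : ∀ a b : ℝ, pt a b 1 = b := fun a b => rfl
  have e1 : f (pt 10 0, 1) = (if 10 * β 0 ≤ e * ‖β‖ then (1:ℝ) else 0) := by
    simp [hf, hpt, h00, h01] <;>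
      (congr 1; rw [eq_iff_iff]; constructor <;> intro <;> linarith)
  have e2 : f (pt (-10) 0, -1) = (if 10 * β 0 ≤ e * ‖β‖ then (1:ℝ) else 0) := by
    simp [hf, hpt, h00, h01] <;>
      (congr 1; rw [eq_iff_iff]; constructor <;> intro <;> linarith)
  have e3 : f (pt 1 2, 1) = (if β 0 + 2 * β 1 ≤ e * ‖β‖ then (1:ℝ) else 0) := by
    simp [hf, hpt, h00, h01] <;>
      (congr 1; rw [eq_iff_iff]; constructor <;> intro <;> linarith)
  have e4 : f (pt 1 (-2), 1) = (if β 0 - 2 * β 1 ≤ e * ‖β‖ then (1:ℝ) else 0) := by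
    simp [hf, hpt, h00, h01] <;>
      (congr 1; rw [eq_iff_iff]; constructor <;> intro <;> linarith)
  have e5 : f (pt (-1) (-2), -1) = (if β 0 + 2 * β 1 ≤ e * ‖β‖ then (1:ℝ) else 0) := by
    simp [hf, hpt, h00, h01] <;>
      (congr 1; rw [eq_iff_iff]; constructor <;> intro <;> linarith)
  have e6 : f (pt (-1) 2, -1) = (if β 0 - 2 * β 1 ≤ e * ‖β‖ then (1:ℝ) else 0) := by
    simp [hf, hpt, h00, h01] <;>
      (congr 1; rw [eq_iff_iff]; constructor <;> intro <;> linarith)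
  rw [e1, e2, e3, e4, e5, e6, advErr]
  have ht4 : ((1/4 : ENNReal)).toReal = 1/4 := by norm_num
  have ht8 : ((1/8 : ENNReal)).toReal = 1/8 := by norm_num
  rw [ht4, ht8]
  simp only [smul_eq_mul]
  ring
end
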